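/- arXiv:1802.02229 — 4 statements merged into one kernel-verified Lean document; each statement's English description precedes it below -/
import Mathlib

section
/- Over a finite tuple type T and a relation R : T → ℕ satisfying the key constraint on k, the following squash-preservation holds for any b : ℕ with b × b = b (e.g., b a predicate value), any E : ℕ, and any value e: ∑_t b × ‖E‖ × [k t = e] × R t = ‖∑_t b × ‖E‖ × [k t = e] × R t‖, where ‖n‖ = min n 1. -/
theorem key_squash_preservation {T K : Type*} [Fintype T] [DecidableEq T] [DecidableEq K]
    (R : T → ℕ) (k : T → K)
    (hkey : ∀ t t' : T,
      (if k t = k t' then 1 else 0) * R t * R t' = (if t = t' then 1 else 0) * R t)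
    (b : ℕ) (hb : b * b = b) (E : ℕ) (e : K) :
    (∑ t : T, b * (min E 1) * (if k t = e then 1 else 0) * R t) =
      min (∑ t : T, b * (min E 1) * (if k t = e then 1 else 0) * R t) 1 := by
  have hR : ∀ t, R t ≤ 1 := by
    intro t
    have h := hkey t t
    simp at h
    nlinarith [h]
  have hb1 : b ≤ 1 := by nlinarith [hb]
  set f := fun t : T => b * (min E 1) * (if k t = e then 1 else 0) * R t with hf
  have hle : ∀ t, f t ≤ 1 := by
    intro t
    have : (if k t = e then 1 else 0) ≤ 1 := by split <;> simp
    calc f t ≤ 1 * 1 * 1 * 1 := by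
            apply Nat.mul_le_mul (Nat.mul_le_mul (Nat.mul_le_mul hb1 (min_le_right _ _)) this) (hR t)
      _ = 1 := by norm_num
  have hsum : (∑ t : T, f t) ≤ 1 := by
    by_cases h : ∃ t0, f t0 ≠ 0
    · obtain ⟨t0, ht0⟩ := h
      have : (∑ t : T, f t) = f t0 := by
        apply Finset.sum_eq_single t0
        · intro t _ hne
          by_contra hft
          have hkt : k t = e := by
            by_contra hk
            simp [hf, hk] at hft
          have hRt : R t ≠ 0 := by
            intro h0
            simp [hf, h0] at hft
          have hkt0 : k t0 = e := by
            by_contra hk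
            simp [hf, hk] at ht0
          have hRt0 : R t0 ≠ 0 := by
            intro h0
            simp [hf, h0] at ht0
          have hk' := hkey t t0
          rw [if_pos (hkt.trans hkt0.symm), if_neg hne] at hk'
          simp at hk'
          tauto
        · intro h; simp at h
      rw [this]; exact hle t0
    · push_neg at h
      simp [h]
  rw [min_eq_left hsum]
end

section
/- Set-semantics idempotence of self-join under DISTINCT: over a finite tuple type T with relation R : T → ℕ and attribute a : T → A, for every value v : A, ‖∑_{t} [a t = v] × R t‖ = ‖∑_{t₁, t₂} [a t₁ = v] × [a t₁ = a t₂] × R t₁ × R t₂‖, i.e., 'SELECT DISTINCT R.a FROM R' equals 'SELECT DISTINCT x.a FROM R x, R y WHERE x.a = y.a'. -/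
theorem distinct_self_join {T A : Type*} [Fintype T] [DecidableEq A]
    (a : T → A) (R : T → ℕ) (v : A) :
    min (∑ t : T, (if a t = v then 1 else 0) * R t) 1 =
      min (∑ t₁ : T, ∑ t₂ : T,
        (if a t₁ = v then 1 else 0) * (if a t₁ = a t₂ then 1 else 0) * R t₁ * R t₂) 1 := by
  have key : (∑ t₁ : T, ∑ t₂ : T,
      (if a t₁ = v then 1 else 0) * (if a t₁ = a t₂ then 1 else 0) * R t₁ * R t₂)
      = (∑ t : T, (if a t = v then 1 else 0) * R t) *
        (∑ t : T, (if a t = v then 1 else 0) * R t) := by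
    rw [Finset.sum_mul_sum]
    apply Finset.sum_congr rfl; intro t₁ _
    apply Finset.sum_congr rfl; intro t₂ _
    by_cases h1 : a t₁ = v
    · subst h1; simp [eq_comm]
    · simp [h1]
  rw [key]
  rcases Nat.eq_zero_or_pos (∑ t : T, (if a t = v then 1 else 0) * R t) with h | h
  · rw [h]
  · have : 1 ≤ (∑ t : T, (if a t = v then 1 else 0) * R t) *
        (∑ t : T, (if a t = v then 1 else 0) * R t) := Nat.one_le_iff_ne_zero.mpr (by positivity)
    omega
end

section
/- Self-join elimination under a key constraint (bag semantics): if R : T → ℕ satisfies the key constraint on k, then for every tuple t, ∑_{t₂, t₃} [t₂ = t] × [k t₃ = k t₂] × [a t₃ ≥ 12] × R t₃ × R t₂ = [a t ≥ 12] × R t; i.e., the index-lookup rewrite of Figure 1 is correct. -/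
theorem self_join_elimination {T K : Type*} [Fintype T] [DecidableEq T] [DecidableEq K]
    (a : T → ℤ) (k : T → K) (R : T → ℕ)
    (hkey : ∀ t t' : T,
      (if k t = k t' then 1 else 0) * R t * R t' = (if t = t' then 1 else 0) * R t)
    (t : T) :
    (∑ t₂ : T, ∑ t₃ : T,
      (if t₂ = t then 1 else 0) * (if k t₃ = k t₂ then 1 else 0) *
        (if a t₃ ≥ 12 then 1 else 0) * R t₃ * R t₂) =
      (if a t ≥ 12 then 1 else 0) * R t := by
  rw [Finset.sum_eq_single t]
  · rw [Finset.sum_eq_single t]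
    · have h := hkey t t
      simp only [if_pos rfl, one_mul] at h ⊢
      simp only [if_true, one_mul] at h ⊢
      by_cases ha : a t ≥ 12 <;> simp [ha, h]
    · intro b _ hb
      have h := hkey b t
      simp only [if_neg hb, if_pos rfl, one_mul, zero_mul] at h ⊢
      rcases eq_or_ne (k b) (k t) with hk | hk
      · rw [if_pos hk] at h ⊢
        simp only [one_mul] at h
        -- h : R b * R t = 0
        cases Nat.mul_eq_zero.mp h with
        | inl h0 => simp [h0]
        | inr h0 => simp [h0]
      · simp [hk]
    · intro h; exact absurd (Finset.mem_univ t) h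
  · intro b _ hb
    simp [hb]
  · intro h; exact absurd (Finset.mem_univ t) h
end

section
/- The Starburst rewrite: over finite tuple types, if itemno is a key of itm, then for all output tuples, ‖∑_{t₂, t'} P(t₂, t') × price(t') × itm(t₂)‖ applied on both sides of the rewrite are equal; concretely, ∑_{t₂} C(t₂) × ‖∑_{t'} D(t', t₂) × price(t')‖ × itm(t₂) = ‖∑_{t₂, t'} C(t₂) × D(t', t₂) × price(t') × itm(t₂)‖, whenever C(t₂) includes the key-equality condition [itemno t₂ = v] for the key itemno of itm; this follows from squash preservation under key constraints. -/
theorem starburst_rewrite {T₁ T₂ K : Type*} [Fintype T₁] [Fintype T₂]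
    [DecidableEq T₁] [DecidableEq K]
    (itm : T₁ → ℕ) (itemno : T₁ → K) (price : T₂ → ℕ)
    (hkey : ∀ t t' : T₁,
      (if itemno t = itemno t' then 1 else 0) * itm t * itm t' =
        (if t = t' then 1 else 0) * itm t)
    (C : T₁ → ℕ) (D : T₂ → T₁ → ℕ)
    (hC : ∀ t₂ : T₁, C t₂ * C t₂ = C t₂)
    (hD : ∀ (t' : T₂) (t₂ : T₁), D t' t₂ * D t' t₂ = D t' t₂)
    (v : K)
    (hCkey : ∀ t₂ : T₁, C t₂ = (if itemno t₂ = v then 1 else 0) * C t₂) :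
    (∑ t₂ : T₁, C t₂ * min (∑ t' : T₂, D t' t₂ * price t') 1 * itm t₂) =
      min (∑ t₂ : T₁, ∑ t' : T₂, C t₂ * D t' t₂ * price t' * itm t₂) 1 := by
  have idem : ∀ n : ℕ, n * n = n → n = 0 ∨ n = 1 := by
    intro n h
    rcases n with _ | _ | k
    · left; rfl
    · right; rfl
    · exfalso; nlinarith
  have hitm : ∀ t, itm t = 0 ∨ itm t = 1 := by
    intro t
    apply idem
    have := hkey t t
    simpa using this
  have huniq : ∀ t t' : T₁, itm t ≠ 0 → itm t' ≠ 0 → itemno t = itemno t' → t = t' := by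
    intro t t' h1 h2 he
    have hk := hkey t t'
    rw [if_pos he, one_mul] at hk
    by_contra hne
    rw [if_neg hne, zero_mul] at hk
    rcases Nat.mul_eq_zero.mp hk with h | h
    · exact h1 h
    · exact h2 h
  by_cases h : ∃ t₀, C t₀ * itm t₀ ≠ 0
  · obtain ⟨t₀, h0⟩ := h
    have hC0 : C t₀ = 1 := by
      rcases idem _ (hC t₀) with h1 | h1
      · exact absurd (by simp [h1]) h0
      · exact h1
    have hi0 : itm t₀ = 1 := by
      rcases hitm t₀ with h1 | h1
      · exact absurd (by simp [h1]) h0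
      · exact h1
    have hv : itemno t₀ = v := by
      by_contra hne
      have := hCkey t₀
      rw [if_neg hne, zero_mul] at this
      simp [hC0] at this
    have hzero : ∀ t : T₁, t ≠ t₀ → C t * itm t = 0 := by
      intro t ht
      by_contra hne
      have hCt : C t ≠ 0 := fun hh => hne (by simp [hh])
      have hit : itm t ≠ 0 := fun hh => hne (by simp [hh])
      have hvt : itemno t = v := by
        by_contra hv'
        exact hCt (by have := hCkey t; rwa [if_neg hv', zero_mul] at this)
      exact ht (huniq t t₀ hit (by simp [hi0]) (by rw [hvt, hv]))
    rw [Finset.sum_eq_single t₀ (fun t _ ht => by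
          rcases Nat.mul_eq_zero.mp (hzero t ht) with hh | hh <;> simp [hh])
        (fun ht => absurd (Finset.mem_univ t₀) ht),
      Finset.sum_eq_single t₀ (fun t _ ht => Finset.sum_eq_zero (fun t' _ => by
          rcases Nat.mul_eq_zero.mp (hzero t ht) with hh | hh <;> simp [hh]))
        (fun ht => absurd (Finset.mem_univ t₀) ht)]
    have hs : ∀ t' : T₂, C t₀ * D t' t₀ * price t' * itm t₀ = D t' t₀ * price t' := by
      intro t'; rw [hC0, hi0]; ring
    rw [Finset.sum_congr rfl (fun t' _ => hs t'), hC0, hi0]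
    ring
  · push_neg at h
    have l : (∑ t₂ : T₁, C t₂ * min (∑ t' : T₂, D t' t₂ * price t') 1 * itm t₂) = 0 := by
      apply Finset.sum_eq_zero; intro t _
      rcases Nat.mul_eq_zero.mp (h t) with h0 | h0 <;> simp [h0]
    have r : (∑ t₂ : T₁, ∑ t' : T₂, C t₂ * D t' t₂ * price t' * itm t₂) = 0 := by
      apply Finset.sum_eq_zero; intro t _
      apply Finset.sum_eq_zero; intro t' _
      rcases Nat.mul_eq_zero.mp (h t) with h0 | h0 <;> simp [h0]
    rw [l, r]
    simp
end
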